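/- A subgraph T of L_n = G is a tour subgraph of G if and only if T is an L_n partial tour subgraph whose equivalence class is one of E01C, 0E1C, EE1C, 001C. Consequently, the minimum length of a tour subgraph of G equals the minimum, over these four classes, of the minimum length of an L_n PTS of that class. -/

import Mathlib

/-- Degree parity class of a vertex: degree zero, odd degree, or even positive degree. -/
inductive DegClass : Type
  | zero : DegClass
  | odd : DegClass
  | evenPos : DegClass
deriving DecidableEq

/-- The parity class of a natural number (a degree). -/
def degClass (d : ℕ) : DegClass :=
  if d = 0 then .zero else if d % 2 = 1 then .odd else .evenPos

/-- Names of the six vertical edge configurations. -/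
inductive VCName : Type
  | onepass : VCName
  | top : VCName
  | bottom : VCName
  | gap : VCName
  | twopass : VCName
  | none : VCName
deriving DecidableEq

/-- Names of the five horizontal edge configurations. -/
inductive HCName : Type
  | h11 : HCName
  | h20 : HCName
  | h02 : HCName
  | h22 : HCName
  | h00 : HCName
deriving DecidableEq

/-- Number of copies of the back cross-aisle edge `a_j a_{j+1}` in a horizontal configuration. -/
def hcA : HCName → ℕ
  | .h11 => 1
  | .h20 => 2
  | .h02 => 0
  | .h22 => 2
  | .h00 => 0

/-- Number of copies of the front cross-aisle edge `b_j b_{j+1}` in a horizontal configuration. -/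
def hcB : HCName → ℕ
  | .h11 => 1
  | .h20 => 0
  | .h02 => 2
  | .h22 => 2
  | .h00 => 0

/-- The seven equivalence classes, as triples (parity of `a_j`, parity of `b_j`, #components). -/
def cUU1C : DegClass × DegClass × ℕ := (.odd, .odd, 1)
def c0E1C : DegClass × DegClass × ℕ := (.zero, .evenPos, 1)
def cE01C : DegClass × DegClass × ℕ := (.evenPos, .zero, 1)
def cEE1C : DegClass × DegClass × ℕ := (.evenPos, .evenPos, 1)
def cEE2C : DegClass × DegClass × ℕ := (.evenPos, .evenPos, 2)
def c000C : DegClass × DegClass × ℕ := (.zero, .zero, 0)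
def c001C : DegClass × DegClass × ℕ := (.zero, .zero, 1)

/-- A single-block parallel-aisle warehouse in the sense of Ratliff and Rosenthal:
`n ≥ 1` vertical pick aisles, two horizontal cross-aisles, `picks j` pick vertices
strictly inside aisle `j`, nonnegative edge lengths, and a depot located at some
cross-aisle vertex `a_j` (if `depotTop`) or `b_j`. -/
structure Warehouse where
  n : ℕ
  npos : 1 ≤ n
  picks : Fin n → ℕ
  vlen : (j : Fin n) → Fin (picks j + 1) → ℝ
  hlenA : Fin (n - 1) → ℝ
  hlenB : Fin (n - 1) → ℝ
  vlen_nonneg : ∀ j i, 0 ≤ vlen j i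
  hlenA_nonneg : ∀ k, 0 ≤ hlenA k
  hlenB_nonneg : ∀ k, 0 ≤ hlenB k
  depotAisle : Fin n
  depotTop : Bool

namespace Warehouse

variable (W : Warehouse)

/-- Vertices of the warehouse graph: in aisle `j`, position `0` is the back cross-aisle
vertex `a_j`, position `picks j + 1` is the front cross-aisle vertex `b_j`, and
positions `1, …, picks j` are the pick vertices of aisle `j`. -/
def V : Type := Σ j : Fin W.n, Fin (W.picks j + 2)

instance : DecidableEq W.V :=
  inferInstanceAs (DecidableEq (Σ j : Fin W.n, Fin (W.picks j + 2)))

instance : Fintype W.V :=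
  inferInstanceAs (Fintype (Σ j : Fin W.n, Fin (W.picks j + 2)))

/-- The back cross-aisle vertex `a_j`. -/
def aV (j : Fin W.n) : W.V := ⟨j, 0⟩

/-- The front cross-aisle vertex `b_j`. -/
def bV (j : Fin W.n) : W.V := ⟨j, Fin.last (W.picks j + 1)⟩

/-- The depot vertex `v₀`. -/
def depot : W.V := if W.depotTop then W.aV W.depotAisle else W.bV W.depotAisle

/-- `v` is a pick vertex, i.e. a vertex strictly inside an aisle. -/
def IsPick (v : W.V) : Prop := 0 < v.2.val ∧ v.2.val < W.picks v.1 + 1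

/-- `v` is a required vertex, i.e. a member of `P` (a pick vertex or the depot). -/
def Required (v : W.V) : Prop := W.IsPick v ∨ v = W.depot

/-- Edges of the warehouse graph: a vertical edge `⟨j, i⟩` joins positions `i` and
`i+1` of aisle `j`; horizontal edges `inr (inl k)` join `a_k a_{k+1}` and
`inr (inr k)` join `b_k b_{k+1}`. -/
def E : Type := (Σ j : Fin W.n, Fin (W.picks j + 1)) ⊕ (Fin (W.n - 1) ⊕ Fin (W.n - 1))

instance : DecidableEq W.E :=
  inferInstanceAs (DecidableEq ((Σ j : Fin W.n, Fin (W.picks j + 1)) ⊕ (Fin (W.n - 1) ⊕ Fin (W.n - 1))))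

instance : Fintype W.E :=
  inferInstanceAs (Fintype ((Σ j : Fin W.n, Fin (W.picks j + 1)) ⊕ (Fin (W.n - 1) ⊕ Fin (W.n - 1))))

/-- The left aisle of a horizontal edge index. -/
def leftAisle (k : Fin (W.n - 1)) : Fin W.n := ⟨k.val, by have := k.isLt; omega⟩

/-- The right aisle of a horizontal edge index. -/
def rightAisle (k : Fin (W.n - 1)) : Fin W.n := ⟨k.val + 1, by have := k.isLt; omega⟩

/-- Endpoints of an edge. -/
def ends : W.E → W.V × W.V
  | .inl ⟨j, i⟩ => (⟨j, i.castSucc⟩, ⟨j, i.succ⟩)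
  | .inr (.inl k) => (W.aV (W.leftAisle k), W.aV (W.rightAisle k))
  | .inr (.inr k) => (W.bV (W.leftAisle k), W.bV (W.rightAisle k))

/-- Length of an edge. -/
def elen : W.E → ℝ
  | .inl ⟨j, i⟩ => W.vlen j i
  | .inr (.inl k) => W.hlenA k
  | .inr (.inr k) => W.hlenB k

/-- A subgraph of `G` is a multiplicity function taking each edge with multiplicity at most 2. -/
def IsSub (T : W.E → ℕ) : Prop := ∀ e, T e ≤ 2

/-- Degree of a vertex in a subgraph, counting edges with multiplicity. -/
def deg (T : W.E → ℕ) (v : W.V) : ℕ :=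
  ∑ e : W.E, T e * ((if (W.ends e).1 = v then 1 else 0) + (if (W.ends e).2 = v then 1 else 0))

/-- Total length of a subgraph, counting edges with multiplicity. -/
def length (T : W.E → ℕ) : ℝ := ∑ e : W.E, (T e : ℝ) * W.elen e

/-- Source of a directed traversal step. -/
def stepSrc (s : W.E × Bool) : W.V := if s.2 then (W.ends s.1).1 else (W.ends s.1).2

/-- Destination of a directed traversal step. -/
def stepDst (s : W.E × Bool) : W.V := if s.2 then (W.ends s.1).2 else (W.ends s.1).1

/-- A list of directed steps is a closed walk. -/
def IsClosedWalk (l : List (W.E × Bool)) : Prop :=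
  l.Chain' (fun s t => W.stepDst s = W.stepSrc t) ∧
  ∀ s ∈ l.head?, ∀ t ∈ l.getLast?, W.stepDst t = W.stepSrc s

/-- `T` is a tour subgraph: every required vertex has positive degree and there is a
closed walk traversing every edge of `T`, counted with multiplicity, exactly once. -/
def IsTour (T : W.E → ℕ) : Prop :=
  W.IsSub T ∧ (∀ v, W.Required v → 0 < W.deg T v) ∧
  ∃ l : List (W.E × Bool), W.IsClosedWalk l ∧ ∀ e : W.E, (l.map Prod.fst).count e = T e

/-- `T` is an `L` partial tour subgraph: `T` is a subgraph supported on `L` and there is a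
subgraph `C` of `G − L` such that `T ∪ C` is a tour subgraph of `G`. -/
def IsPTS (L : Set W.E) (T : W.E → ℕ) : Prop :=
  W.IsSub T ∧ (∀ e ∉ L, T e = 0) ∧
  ∃ C : W.E → ℕ, W.IsSub C ∧ (∀ e ∈ L, C e = 0) ∧ W.IsTour (fun e => T e + C e)

/-- Two `L` PTSs are equivalent: any completion of one is a completion of the other. -/
def EquivPTS (L : Set W.E) (T₁ T₂ : W.E → ℕ) : Prop :=
  ∀ C : W.E → ℕ, W.IsSub C → (∀ e ∈ L, C e = 0) →
    (W.IsTour (fun e => T₁ e + C e) ↔ W.IsTour (fun e => T₂ e + C e))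

/-- The edge set containing the vertical edges of the (0-indexed) aisles `< vmax` and the
horizontal edges with (0-indexed) index `< hmax`.  Thus, in paper (1-indexed) notation,
`L_j = edgesUpTo j (j-1)`, `L_j^- = edgesUpTo (j-1) (j-1)` and `G = edgesUpTo n (n-1)`. -/
def edgesUpTo (vmax hmax : ℕ) : Set W.E := fun e =>
  match e with
  | .inl ⟨i, _⟩ => i.val < vmax
  | .inr (.inl k) => k.val < hmax
  | .inr (.inr k) => k.val < hmax

/-- The simple graph on the vertices of `G` induced by the edges of positive multiplicity. -/
def sgraph (T : W.E → ℕ) : SimpleGraph W.V where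
  Adj v w := v ≠ w ∧ ∃ e, 0 < T e ∧
    (((W.ends e).1 = v ∧ (W.ends e).2 = w) ∨ ((W.ends e).1 = w ∧ (W.ends e).2 = v))
  symm := by
    constructor
    intro v w hvw
    obtain ⟨hne, e, he, hor⟩ := hvw
    exact ⟨hne.symm, e, he, hor.symm⟩
  loopless := by constructor; intro v h; exact h.1 rfl

/-- Number of connected components of a subgraph after deleting all vertices of degree zero. -/
noncomputable def numComp (T : W.E → ℕ) : ℕ :=
  Nat.card ((W.sgraph T).induce {v : W.V | 0 < W.deg T v}).ConnectedComponent

/-- `v` and `w` both have positive degree but lie in different connected components of `T`. -/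
def SepComp (T : W.E → ℕ) (v w : W.V) : Prop :=
  0 < W.deg T v ∧ 0 < W.deg T w ∧ ¬ (W.sgraph T).Reachable v w

/-- The equivalence class of a subgraph relative to the cross-aisle vertices of aisle `j`:
the degree parities of `a_j` and `b_j` and the number of nonempty connected components. -/
noncomputable def classOf (T : W.E → ℕ) (j : Fin W.n) : DegClass × DegClass × ℕ :=
  (degClass (W.deg T (W.aV j)), degClass (W.deg T (W.bV j)), W.numComp T)

theorem exists_gapIdx (j : Fin W.n) :
    ∃ g : Fin (W.picks j + 1), ∀ i, W.vlen j i ≤ W.vlen j g := by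
  obtain ⟨g, -, hg⟩ :=
    Finset.exists_max_image (Finset.univ : Finset (Fin (W.picks j + 1))) (W.vlen j)
      ⟨0, Finset.mem_univ 0⟩
  exact ⟨g, fun i => hg i (Finset.mem_univ i)⟩

/-- The vertical edge of aisle `j` of maximum length: the edge omitted by the `gap`
configuration (which leaves the largest section of the aisle unconnected). -/
noncomputable def gapIdx (j : Fin W.n) : Fin (W.picks j + 1) := (W.exists_gapIdx j).choose

theorem gapIdx_spec (j : Fin W.n) : ∀ i, W.vlen j i ≤ W.vlen j (W.gapIdx j) :=
  (W.exists_gapIdx j).choose_spec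

/-- The multiplicity of the `i`-th vertical edge of aisle `j` in each of the six vertical
edge configurations. -/
noncomputable def vconfFun (j : Fin W.n) (c : VCName) (i : Fin (W.picks j + 1)) : ℕ :=
  match c with
  | .onepass => 1
  | .top => if i.val < W.picks j then 2 else 0
  | .bottom => if 1 ≤ i.val then 2 else 0
  | .gap => if i = W.gapIdx j then 0 else 2
  | .twopass => 2
  | .none => 0

/-- A vertical edge configuration in aisle `j`, as a subgraph of `G`. -/
noncomputable def vcSub (j : Fin W.n) (c : VCName) : W.E → ℕ := fun e =>
  match e with
  | .inl ⟨i, x⟩ =>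
      if h : i = j then W.vconfFun j c ⟨x.val, by exact h ▸ x.isLt⟩ else 0
  | .inr _ => 0

/-- A horizontal edge configuration between aisles `k` and `k+1`, as a subgraph of `G`. -/
def hcSub (k : Fin (W.n - 1)) (c : HCName) : W.E → ℕ := fun e =>
  match e with
  | .inl _ => 0
  | .inr (.inl k') => if k' = k then hcA c else 0
  | .inr (.inr k') => if k' = k then hcB c else 0

end Warehouse

section Aux

namespace Warehouse
variable (W : Warehouse)

lemma aux_mem_L (e : W.E) : e ∈ W.edgesUpTo W.n (W.n - 1) := by
  match e with
  | .inl ⟨j, i⟩ => exact j.isLt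
  | .inr (.inl k) => exact k.isLt
  | .inr (.inr k) => exact k.isLt

lemma aux_ends_ne (e : W.E) : (W.ends e).1 ≠ (W.ends e).2 := by
  match e with
  | .inl ⟨j, i⟩ =>
    intro h
    have := congrArg (fun v : W.V => v.2.val) h
    simp [Warehouse.ends] at this
  | .inr (.inl k) =>
    intro h
    have := congrArg (fun v : W.V => v.1.val) h
    simp [Warehouse.ends, Warehouse.aV, Warehouse.leftAisle, Warehouse.rightAisle] at this
  | .inr (.inr k) =>
    intro h
    have := congrArg (fun v : W.V => v.1.val) h
    simp [Warehouse.ends, Warehouse.bV, Warehouse.leftAisle, Warehouse.rightAisle] at this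

end Warehouse

end Aux
section Aux2

lemma aux_sum_count {α : Type*} [DecidableEq α] [Fintype α] (l : List α) (f : α → ℕ) :
    ∑ e, l.count e * f e = (l.map f).sum := by
  induction l with
  | nil => simp
  | cons a t ih =>
    have h : ∀ e : α, (a :: t).count e * f e
        = t.count e * f e + (if e = a then f e else 0) := by
      intro e
      rw [List.count_cons]
      by_cases h : e = a
      · simp [h, add_mul]
      · simp [h]
        exact Or.inl fun hh => h hh.symm
    rw [Finset.sum_congr rfl fun e _ => h e, Finset.sum_add_distrib, ih,
      Finset.sum_ite_eq' Finset.univ a f]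
    simp [add_comm]

lemma aux_sum_map_add {α : Type*} (l : List α) (f g : α → ℕ) :
    (l.map (fun s => f s + g s)).sum = (l.map f).sum + (l.map g).sum := by
  induction l with
  | nil => simp
  | cons a t ih => simp [ih]; omega

lemma aux_count_map {α β : Type*} [DecidableEq β] (l : List α) (p : α → β) (v : β) :
    (l.map (fun s => if p s = v then 1 else 0)).sum = (l.map p).count v := by
  induction l with
  | nil => simp
  | cons a t ih =>
    simp only [List.map_cons, List.sum_cons, ih, List.count_cons]
    by_cases h : p a = v <;> simp [h] <;> omega
    

end Aux2
section Aux3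

namespace Warehouse
variable (W : Warehouse)

/-- Structure of destinations along a chain. -/
lemma aux_map_dst : ∀ (t : List (W.E × Bool)) (a : W.E × Bool),
    List.Chain (fun s u => W.stepDst s = W.stepSrc u) a t →
    (a :: t).map W.stepDst
      = t.map W.stepSrc ++ [W.stepDst ((a :: t).getLast (List.cons_ne_nil a t))] := by
  intro t
  induction t with
  | nil => intro a _; simp
  | cons b u ih =>
    intro a h
    unfold List.Chain at h; rw [List.chain_cons] at h
    have hrec := ih b h.2
    rw [List.map_cons, hrec, List.getLast_cons (List.cons_ne_nil b u)]
    simp [h.1]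

/-- In a nonempty closed walk, destinations are a permutation of sources. -/
lemma aux_dst_perm_src (l : List (W.E × Bool)) (hl : W.IsClosedWalk l) :
    (l.map W.stepDst).Perm (l.map W.stepSrc) := by
  match l with
  | [] => simp
  | a :: t =>
    have hchain : List.Chain (fun s u => W.stepDst s = W.stepSrc u) a t := hl.1
    have hlast := hl.2 a rfl ((a :: t).getLast (List.cons_ne_nil a t))
      (List.getLast?_eq_getLast _)
    rw [W.aux_map_dst t a hchain, hlast]
    exact (List.perm_append_singleton _ _).trans (by simp)

/-- Degree in terms of the covering walk. -/
lemma aux_deg_eq (T : W.E → ℕ) (l : List (W.E × Bool))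
    (hc : ∀ e : W.E, (l.map Prod.fst).count e = T e) (v : W.V) :
    W.deg T v = (l.map W.stepSrc).count v + (l.map W.stepDst).count v := by
  unfold Warehouse.deg
  have h1 : ∀ e : W.E, T e = (l.map Prod.fst).count e := fun e => (hc e).symm
  calc ∑ e : W.E, T e * ((if (W.ends e).1 = v then 1 else 0) + (if (W.ends e).2 = v then 1 else 0))
      = ((l.map Prod.fst).map
          (fun e => (if (W.ends e).1 = v then 1 else 0) + (if (W.ends e).2 = v then 1 else 0))).sum := by
        rw [← aux_sum_count]
        exact Finset.sum_congr rfl fun e _ => by rw [h1 e]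
    _ = (l.map (fun s => (if W.stepSrc s = v then 1 else 0) + (if W.stepDst s = v then 1 else 0))).sum := by
        rw [List.map_map]
        congr 1
        apply List.map_congr_left
        intro s _
        cases hb : s.2 <;> simp [Warehouse.stepSrc, Warehouse.stepDst, hb, Function.comp] <;> omega
    _ = (l.map W.stepSrc).count v + (l.map W.stepDst).count v := by
        rw [aux_sum_map_add, aux_count_map, aux_count_map]

/-- Every vertex has even degree in a tour subgraph. -/
lemma aux_deg_even (T : W.E → ℕ) (l : List (W.E × Bool)) (hw : W.IsClosedWalk l)
    (hc : ∀ e : W.E, (l.map Prod.fst).count e = T e) (v : W.V) :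
    W.deg T v % 2 = 0 := by
  rw [W.aux_deg_eq T l hc v, (W.aux_dst_perm_src l hw).count_eq v]
  omega

end Warehouse

end Aux3
section Aux4

namespace Warehouse
variable (W : Warehouse)

lemma aux_deg_pos_of_endpoint (T : W.E → ℕ) (e : W.E) (he : 0 < T e) (v : W.V)
    (hv : (W.ends e).1 = v ∨ (W.ends e).2 = v) : 0 < W.deg T v := by
  have hterm : 0 < T e * ((if (W.ends e).1 = v then 1 else 0) + (if (W.ends e).2 = v then 1 else 0)) := by
    rcases hv with h | h <;> simp [h] <;> omega
  refine lt_of_lt_of_le hterm ?_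
  unfold Warehouse.deg
  exact Finset.single_le_sum
    (f := fun e' => T e' * ((if (W.ends e').1 = v then 1 else 0) + (if (W.ends e').2 = v then 1 else 0)))
    (fun i _ => Nat.zero_le _) (Finset.mem_univ e)

lemma aux_exists_edge (T : W.E → ℕ) (v : W.V) (h : 0 < W.deg T v) :
    ∃ e, 0 < T e ∧ ((W.ends e).1 = v ∨ (W.ends e).2 = v) := by
  by_contra hcon
  push_neg at hcon
  have : W.deg T v = 0 := by
    apply Finset.sum_eq_zero
    intro e _
    rcases Nat.eq_zero_or_pos (T e) with h0 | hp
    · simp [h0]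
    · obtain ⟨h1, h2⟩ := hcon e hp
      simp [h1, h2]
  omega

lemma aux_adj_deg_pos (T : W.E → ℕ) {v w : W.V} (h : (W.sgraph T).Adj v w) :
    0 < W.deg T w := by
  obtain ⟨-, e, he, hor⟩ := h
  rcases hor with ⟨h1, h2⟩ | ⟨h1, h2⟩
  · exact W.aux_deg_pos_of_endpoint T e he w (Or.inr h2)
  · exact W.aux_deg_pos_of_endpoint T e he w (Or.inl h1)

lemma aux_step_adj (T : W.E → ℕ) (s : W.E × Bool) (hs : 0 < T s.1) :
    (W.sgraph T).Adj (W.stepSrc s) (W.stepDst s) := by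
  obtain ⟨e, b⟩ := s
  have hne := W.aux_ends_ne e
  have hs' : 0 < T e := hs
  cases b
  · have h1 : W.stepSrc (e, false) = (W.ends e).2 := by simp [Warehouse.stepSrc]
    have h2 : W.stepDst (e, false) = (W.ends e).1 := by simp [Warehouse.stepDst]
    rw [h1, h2]
    exact ⟨fun h => hne h.symm, e, hs', Or.inr ⟨rfl, rfl⟩⟩
  · have h1 : W.stepSrc (e, true) = (W.ends e).1 := by simp [Warehouse.stepSrc]
    have h2 : W.stepDst (e, true) = (W.ends e).2 := by simp [Warehouse.stepDst]
    rw [h1, h2]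
    exact ⟨hne, e, hs', Or.inl ⟨rfl, rfl⟩⟩

lemma aux_induced_reach (T : W.E → ℕ) :
    ∀ {v w : W.V} (_ : (W.sgraph T).Walk v w) (hv : 0 < W.deg T v) (hw : 0 < W.deg T w),
    ((W.sgraph T).induce {x : W.V | 0 < W.deg T x}).Reachable ⟨v, hv⟩ ⟨w, hw⟩ := by
  intro v w p
  induction p with
  | nil => intro hv hw; exact SimpleGraph.Reachable.refl _
  | @cons u x y h p ih =>
    intro hv hw
    have hx : 0 < W.deg T x := W.aux_adj_deg_pos T h
    have hadj : ((W.sgraph T).induce {x : W.V | 0 < W.deg T x}).Adj ⟨u, hv⟩ ⟨x, hx⟩ := h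
    exact hadj.reachable.trans (ih hx hw)

lemma aux_chain_reach (T : W.E → ℕ) :
    ∀ (t : List (W.E × Bool)) (a : W.E × Bool),
      List.Chain (fun s u => W.stepDst s = W.stepSrc u) a t →
      (∀ s ∈ a :: t, 0 < T s.1) →
      ∀ s ∈ a :: t, (W.sgraph T).Reachable (W.stepSrc a) (W.stepSrc s)
        ∧ (W.sgraph T).Reachable (W.stepSrc a) (W.stepDst s) := by
  intro t
  induction t with
  | nil =>
    intro a _ hpos s hs
    simp only [List.mem_singleton] at hs
    subst hs
    exact ⟨SimpleGraph.Reachable.refl _,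
      (W.aux_step_adj T s (hpos s (by simp))).reachable⟩
  | cons b u ih =>
    intro a h hpos s hs
    unfold List.Chain at h; rw [List.chain_cons] at h
    have hab : (W.sgraph T).Reachable (W.stepSrc a) (W.stepSrc b) := by
      rw [← h.1]
      exact (W.aux_step_adj T a (hpos a (by simp))).reachable
    rcases List.mem_cons.1 hs with rfl | hs'
    · exact ⟨SimpleGraph.Reachable.refl _,
        (W.aux_step_adj T s (hpos s (by simp))).reachable⟩
    · have := ih b h.2 (fun x hx => hpos x (List.mem_cons_of_mem a hx)) s hs'
      exact ⟨hab.trans this.1, hab.trans this.2⟩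

end Warehouse

end Aux4
section Aux5

namespace Warehouse
variable (W : Warehouse)

lemma aux_numComp_one (T : W.E → ℕ) (hT : W.IsTour T) : W.numComp T = 1 := by
  obtain ⟨hsub, hreq, l, hcw, hcount⟩ := hT
  have hdep : 0 < W.deg T W.depot := hreq _ (Or.inr rfl)
  rcases l with _ | ⟨a, t⟩
  · exfalso
    have hT0 : ∀ e, T e = 0 := fun e => by simpa using (hcount e).symm
    have : W.deg T W.depot = 0 := by
      apply Finset.sum_eq_zero
      intro e _
      simp [hT0 e]
    omega
  · have hchain : List.Chain (fun s u => W.stepDst s = W.stepSrc u) a t := hcw.1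
    have hpos : ∀ s ∈ a :: t, 0 < T s.1 := by
      intro s hs
      rw [← hcount s.1]
      exact List.count_pos_iff.2 (List.mem_map_of_mem (f := Prod.fst) hs)
    have reach : ∀ v : W.V, 0 < W.deg T v →
        (W.sgraph T).Reachable (W.stepSrc a) v := by
      intro v hv
      obtain ⟨e, he, hend⟩ := W.aux_exists_edge T v hv
      have hmem : e ∈ (a :: t).map Prod.fst := by
        rw [← List.count_pos_iff, hcount e]; exact he
      obtain ⟨s, hs, hs1⟩ := List.mem_map.1 hmem
      have hr := W.aux_chain_reach T t a hchain hpos s hs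
      have hsd : W.stepSrc s = v ∨ W.stepDst s = v := by
        obtain ⟨e', b⟩ := s
        cases hs1
        cases b
        · have h1 : W.stepSrc (e', false) = (W.ends e').2 := by simp [Warehouse.stepSrc]
          have h2 : W.stepDst (e', false) = (W.ends e').1 := by simp [Warehouse.stepDst]
          rw [h1, h2]; tauto
        · have h1 : W.stepSrc (e', true) = (W.ends e').1 := by simp [Warehouse.stepSrc]
          have h2 : W.stepDst (e', true) = (W.ends e').2 := by simp [Warehouse.stepDst]
          rw [h1, h2]; tauto
      rcases hsd with h | h
      · exact h ▸ hr.1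
      · exact h ▸ hr.2
    unfold Warehouse.numComp
    rw [Nat.card_eq_one_iff_unique]
    constructor
    · constructor
      intro c d
      refine SimpleGraph.ConnectedComponent.ind₂ (fun v w => ?_) c d
      obtain ⟨x, hx⟩ := v
      obtain ⟨y, hy⟩ := w
      apply SimpleGraph.ConnectedComponent.sound
      obtain ⟨p⟩ := ((reach x hx).symm.trans (reach y hy))
      exact W.aux_induced_reach T p hx hy
    · exact ⟨SimpleGraph.connectedComponentMk _ ⟨W.depot, hdep⟩⟩

lemma aux_tour_class (T : W.E → ℕ) (hT : W.IsTour T) (j : Fin W.n) :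
    W.classOf T j ∈ ({cE01C, c0E1C, cEE1C, c001C} : Set (DegClass × DegClass × ℕ)) := by
  have hcomp := W.aux_numComp_one T hT
  obtain ⟨-, -, l, hcw, hcount⟩ := hT
  have ha := W.aux_deg_even T l hcw hcount (W.aV j)
  have hb := W.aux_deg_even T l hcw hcount (W.bV j)
  unfold Warehouse.classOf
  rw [hcomp]
  unfold degClass
  rcases Nat.eq_zero_or_pos (W.deg T (W.aV j)) with h1 | h1 <;>
    rcases Nat.eq_zero_or_pos (W.deg T (W.bV j)) with h2 | h2
  · have : ((DegClass.zero, DegClass.zero, 1) : DegClass × DegClass × ℕ) = c001C := rfl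
    simp [h1, h2, this]
  · have e2 : W.deg T (W.bV j) ≠ 0 := by omega
    have o2 : ¬ (W.deg T (W.bV j) % 2 = 1) := by omega
    simp [h1, e2, o2, c0E1C]
  · have e1 : W.deg T (W.aV j) ≠ 0 := by omega
    have o1 : ¬ (W.deg T (W.aV j) % 2 = 1) := by omega
    simp [h2, e1, o1, cE01C]
  · have e1 : W.deg T (W.aV j) ≠ 0 := by omega
    have o1 : ¬ (W.deg T (W.aV j) % 2 = 1) := by omega
    have e2 : W.deg T (W.bV j) ≠ 0 := by omega
    have o2 : ¬ (W.deg T (W.bV j) % 2 = 1) := by omega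
    simp [e1, o1, e2, o2, cEE1C]

lemma aux_tour_iff_pts (T : W.E → ℕ) :
    W.IsTour T ↔ W.IsPTS (W.edgesUpTo W.n (W.n - 1)) T := by
  constructor
  · intro h
    refine ⟨h.1, fun e he => absurd (W.aux_mem_L e) he, fun _ => 0,
      fun _ => Nat.zero_le 2, fun _ _ => rfl, ?_⟩
    have he : (fun e => T e + (fun _ => (0:ℕ)) e) = T := funext fun e => by simp
    rwa [he]
  · rintro ⟨hsub, -, C, -, hC0, htour⟩
    have he : (fun e => T e + C e) = T := funext fun e => by rw [hC0 e (W.aux_mem_L e), Nat.add_zero]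
    rwa [he] at htour

end Warehouse

end Aux5
/-- a subgraph of `G = L_n` is a tour subgraph iff it is an `L_n` PTS of
class `E01C`, `0E1C`, `EE1C` or `001C`; consequently the set of lengths of tour subgraphs
equals the set of lengths of `L_n` PTSs of those four classes (so the minima coincide). -/
theorem stmt4 (W : Warehouse) :
    (∀ T : W.E → ℕ, W.IsTour T ↔
      (W.IsPTS (W.edgesUpTo W.n (W.n - 1)) T ∧
        W.classOf T ⟨W.n - 1, by have := W.npos; omega⟩ ∈
          ({cE01C, c0E1C, cEE1C, c001C} : Set (DegClass × DegClass × ℕ)))) ∧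
    {x : ℝ | ∃ T : W.E → ℕ, W.IsTour T ∧ W.length T = x} =
      {x : ℝ | ∃ T : W.E → ℕ, W.IsPTS (W.edgesUpTo W.n (W.n - 1)) T ∧
        W.classOf T ⟨W.n - 1, by have := W.npos; omega⟩ ∈
          ({cE01C, c0E1C, cEE1C, c001C} : Set (DegClass × DegClass × ℕ)) ∧
        W.length T = x} := by
  have key : ∀ T : W.E → ℕ, W.IsTour T ↔
      (W.IsPTS (W.edgesUpTo W.n (W.n - 1)) T ∧
        W.classOf T ⟨W.n - 1, by have := W.npos; omega⟩ ∈
          ({cE01C, c0E1C, cEE1C, c001C} : Set (DegClass × DegClass × ℕ))) := by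
    intro T
    constructor
    · intro h
      exact ⟨(W.aux_tour_iff_pts T).1 h, W.aux_tour_class T h _⟩
    · intro h
      exact (W.aux_tour_iff_pts T).2 h.1
  refine ⟨key, ?_⟩
  ext x
  simp only [Set.mem_setOf_eq]
  constructor
  · rintro ⟨T, hT, hx⟩
    obtain ⟨h1, h2⟩ := (key T).1 hT
    exact ⟨T, h1, h2, hx⟩
  · rintro ⟨T, h1, h2, hx⟩
    exact ⟨T, (key T).2 ⟨h1, h2⟩, hx⟩
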